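/- Suppose θ is a stable equilibrium of the Kuramoto network. Then ρ₁² ≥ (1 + |ρ₂|²)/2 + (1/n²)·∑_{j=1}^{n}∑_{k=1}^{n} (1 − A j k)·(cos(θ_k − θ_j) − cos²(θ_k − θ_j)), where ρ₁ = (1/n)·∑_j cos(θ_j) and ρ₂ = (1/n)·∑_j exp(2iθ_j). -/

import Mathlib

/-- If `θ` is a stable equilibrium (normalized so that `ρ₁` is real and nonnegative), then
`ρ₁² ≥ (1 + |ρ₂|²)/2 + (1/n²)·∑_{j,k} (1 − A j k)(cos(θ_k−θ_j) − cos²(θ_k−θ_j))`. -/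
theorem stable_equilibrium_rho1_sq_lower_bound
    (n : ℕ) (hn : 1 ≤ n) (A : Fin n → Fin n → ℝ) (θ : Fin n → ℝ)
    (hsym : ∀ j k, A j k = A k j)
    (h01 : ∀ j k, A j k = 0 ∨ A j k = 1)
    (hdiag : ∀ j, A j j = 1)
    (heq : ∀ j, ∑ k : Fin n, A j k * Real.sin (θ k - θ j) = 0)
    (hstab : ∀ v : Fin n → ℝ,
      0 ≤ ∑ j : Fin n, ∑ k : Fin n,
            A j k * Real.cos (θ k - θ j) * (v j - v k) ^ 2)
    (hsin0 : ∑ j : Fin n, Real.sin (θ j) = 0)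
    (ρ₁ : ℝ) (hρ₁ : ρ₁ = (1 / (n : ℝ)) * ∑ j : Fin n, Real.cos (θ j))
    (hρ₁nonneg : 0 ≤ ρ₁)
    (ρ₂ : ℂ) (hρ₂ : ρ₂ = (1 / (n : ℂ)) *
        ∑ j : Fin n, Complex.exp (2 * Complex.I * (θ j : ℂ))) :
    ρ₁ ^ 2 ≥ (1 + ‖ρ₂‖ ^ 2) / 2
      + (1 / (n : ℝ) ^ 2) * ∑ j : Fin n, ∑ k : Fin n,
          (1 - A j k) * (Real.cos (θ k - θ j) - Real.cos (θ k - θ j) ^ 2) := by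
  have hn' : (0:ℝ) < (n:ℝ) := by exact_mod_cast hn
  set a := ∑ j : Fin n, Real.cos (θ j) with ha
  set p := ∑ j : Fin n, Real.cos (θ j) ^ 2 with hp
  set q := ∑ j : Fin n, Real.sin (θ j) ^ 2 with hq
  set r := ∑ j : Fin n, Real.cos (θ j) * Real.sin (θ j) with hr
  set D := ∑ j : Fin n, ∑ k : Fin n,
      (1 - A j k) * (Real.cos (θ k - θ j) - Real.cos (θ k - θ j) ^ 2) with hD
  -- pointwise key identity
  have key : ∀ x y : ℝ, Real.cos (y - x) * (Real.sin x - Real.sin y) ^ 2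
      + Real.cos (y - x) * (Real.cos x - Real.cos y) ^ 2
      = 2 * (Real.cos (y - x) - Real.cos (y - x) ^ 2) := by
    intro x y
    have hx := Real.sin_sq_add_cos_sq x
    have hy := Real.sin_sq_add_cos_sq y
    rw [Real.cos_sub]
    linear_combination (Real.cos y * Real.cos x + Real.sin y * Real.sin x) * hx
      + (Real.cos y * Real.cos x + Real.sin y * Real.sin x) * hy
  have h1 := hstab (fun j => Real.sin (θ j))
  have h2 := hstab (fun j => Real.cos (θ j))
  have hA : 0 ≤ ∑ j : Fin n, ∑ k : Fin n,
      A j k * (2 * (Real.cos (θ k - θ j) - Real.cos (θ k - θ j) ^ 2)) := by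
    have h12 := add_nonneg h1 h2
    rw [← Finset.sum_add_distrib] at h12
    calc (0:ℝ) ≤ _ := h12
      _ = _ := by
        refine Finset.sum_congr rfl fun j _ => ?_
        rw [← Finset.sum_add_distrib]
        refine Finset.sum_congr rfl fun k _ => ?_
        linear_combination A j k * key (θ j) (θ k)
  have hsplit : ∑ j : Fin n, ∑ k : Fin n,
      A j k * (2 * (Real.cos (θ k - θ j) - Real.cos (θ k - θ j) ^ 2))
      = 2 * (∑ j : Fin n, ∑ k : Fin n,
          (Real.cos (θ k - θ j) - Real.cos (θ k - θ j) ^ 2)) - 2 * D := by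
    rw [hD]
    simp only [Finset.mul_sum]
    rw [← Finset.sum_sub_distrib]
    refine Finset.sum_congr rfl fun j _ => ?_
    rw [← Finset.sum_sub_distrib]
    refine Finset.sum_congr rfl fun k _ => ?_
    ring
  -- products as double sums
  have P : ∀ f g : Fin n → ℝ, (∑ i : Fin n, f i) * (∑ i : Fin n, g i)
      = ∑ j : Fin n, ∑ k : Fin n, f j * g k := fun f g =>
    Finset.sum_mul_sum _ _ _ _
  have hfull : ∑ j : Fin n, ∑ k : Fin n,
      (Real.cos (θ k - θ j) - Real.cos (θ k - θ j) ^ 2)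
      = a * a + (∑ j : Fin n, Real.sin (θ j)) * (∑ j : Fin n, Real.sin (θ j))
        - p * p - q * q - 2 * (r * r) := by
    rw [ha, hp, hq, hr, P, P, P, P, P]
    simp only [Finset.mul_sum, ← Finset.sum_sub_distrib, ← Finset.sum_add_distrib]
    refine Finset.sum_congr rfl fun j _ => ?_
    refine Finset.sum_congr rfl fun k _ => ?_
    rw [Real.cos_sub]
    ring
  rw [hsin0] at hfull
  have ineq1 : D ≤ a * a - p * p - q * q - 2 * (r * r) := by
    rw [hsplit, hfull] at hA
    linarith
  have hpq : p + q = (n:ℝ) := by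
    rw [hp, hq, ← Finset.sum_add_distrib]
    have : ∀ j : Fin n, Real.cos (θ j) ^ 2 + Real.sin (θ j) ^ 2 = 1 := fun j => by
      rw [add_comm]; exact Real.sin_sq_add_cos_sq (θ j)
    simp [this]
  -- ρ₂
  have hre_im : ρ₂ = ((1/(n:ℝ) * ∑ j : Fin n, Real.cos (2 * θ j) : ℝ) : ℂ)
      + ((1/(n:ℝ) * ∑ j : Fin n, Real.sin (2 * θ j) : ℝ) : ℂ) * Complex.I := by
    rw [hρ₂]
    have e : ∀ j : Fin n, Complex.exp (2 * Complex.I * (θ j : ℂ))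
        = ((Real.cos (2 * θ j) : ℝ) : ℂ) + ((Real.sin (2 * θ j) : ℝ) : ℂ) * Complex.I := by
      intro j
      rw [show (2 : ℂ) * Complex.I * (θ j : ℂ) = ((2 * θ j : ℝ) : ℂ) * Complex.I by
        push_cast; ring, Complex.exp_mul_I, Complex.ofReal_cos, Complex.ofReal_sin]
    simp_rw [e]
    rw [Finset.sum_add_distrib, ← Finset.sum_mul]
    push_cast
    ring
  have habs : ‖ρ₂‖ ^ 2
      = (1/(n:ℝ) * ∑ j : Fin n, Real.cos (2 * θ j)) ^ 2
        + (1/(n:ℝ) * ∑ j : Fin n, Real.sin (2 * θ j)) ^ 2 := by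
    rw [hre_im, Complex.sq_norm, Complex.normSq_add_mul_I]
  have hc2 : ∑ j : Fin n, Real.cos (2 * θ j) = 2 * p - n := by
    have e : ∀ x : ℝ, Real.cos (2 * x) = 2 * Real.cos x ^ 2 - 1 := Real.cos_two_mul
    simp_rw [e]
    rw [Finset.sum_sub_distrib, ← Finset.mul_sum, ← hp]
    simp
  have hs2 : ∑ j : Fin n, Real.sin (2 * θ j) = 2 * r := by
    have e : ∀ x : ℝ, Real.sin (2 * x) = 2 * (Real.cos x * Real.sin x) := fun x => by
      rw [Real.sin_two_mul]; ring
    simp_rw [e]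
    rw [← Finset.mul_sum, ← hr]
  rw [ge_iff_le, ← sub_nonneg, hρ₁, habs, hc2, hs2]
  have expand : (1 / (n:ℝ) * a) ^ 2
      - ((1 + ((1/(n:ℝ) * (2 * p - n)) ^ 2 + (1/(n:ℝ) * (2 * r)) ^ 2)) / 2
        + 1 / (n:ℝ) ^ 2 * D)
      = (1 / (n:ℝ) ^ 2) * ((a * a - p * p - q * q - 2 * (r * r)) - D) := by
    rw [← hpq]
    have hpq' : (0:ℝ) < p + q := by rw [hpq]; exact hn'
    field_simp
    ring
  rw [expand]
  exact mul_nonneg (by positivity) (sub_nonneg.mpr ineq1)
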